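/- Let u = (x₀,y₀,z₀) with x₀+y₀+z₀ = 1 and define f_u(t) = (x(t), y(t), z(t)) by x(t) = (x₀ - (2x₀+y₀)²/4)e^{-t} + (2x₀+y₀)²/4, y(t) = -2(x₀ - (2x₀+y₀)²/4)e^{-t} - (2x₀+y₀)²/2 + 2x₀+y₀, z(t) = 1 - x(t) - y(t). Then f_u solves the ODE d/dt f_u(t) = F(f_u(t)) with f_u(0) = u, where F(x,y,z) = (xy + x² + y²/4 - x, xy + yz + 2xz + y²/2 - y, yz + z² + y²/4 - z). -/

import Mathlib

/-- The explicit functions x(t), y(t), z(t) solve the ODE d/dt f = F(f)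
with initial condition (x₀,y₀,z₀). -/
theorem stmt_7 (x₀ y₀ z₀ : ℝ) (hsum : x₀ + y₀ + z₀ = 1)
    (x y z : ℝ → ℝ)
    (hx : ∀ t, x t = (x₀ - (2*x₀ + y₀)^2/4) * Real.exp (-t) + (2*x₀ + y₀)^2/4)
    (hy : ∀ t, y t = -2*(x₀ - (2*x₀ + y₀)^2/4) * Real.exp (-t)
                       - (2*x₀ + y₀)^2/2 + 2*x₀ + y₀)
    (hz : ∀ t, z t = 1 - x t - y t) :
    x 0 = x₀ ∧ y 0 = y₀ ∧ z 0 = z₀ ∧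
    ∀ t : ℝ,
      HasDerivAt x (x t * y t + (x t)^2 + (y t)^2/4 - x t) t ∧
      HasDerivAt y (x t * y t + y t * z t + 2*(x t)*(z t) + (y t)^2/2 - y t) t ∧
      HasDerivAt z (y t * z t + (z t)^2 + (y t)^2/4 - z t) t := by
  set a : ℝ := x₀ - (2*x₀ + y₀)^2/4 with ha
  have he : ∀ t : ℝ, HasDerivAt (fun s : ℝ => Real.exp (-s)) (-Real.exp (-t)) t := by
    intro t
    simpa [Function.comp_def] using (Real.hasDerivAt_exp (-t)).comp t (hasDerivAt_neg t)
  refine ⟨by rw [hx]; simp [Real.exp_zero]; ring, by rw [hy]; simp [Real.exp_zero]; ring,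
    by rw [hz, hx, hy]; simp [Real.exp_zero]; linarith, fun t => ?_⟩
  have hxd : HasDerivAt x (-(a * Real.exp (-t))) t := by
    have : HasDerivAt (fun s : ℝ => a * Real.exp (-s) + (2*x₀ + y₀)^2/4)
        (a * (-Real.exp (-t))) t := ((he t).const_mul a).add_const _
    have hxe : x = fun s : ℝ => a * Real.exp (-s) + (2*x₀ + y₀)^2/4 := funext hx
    rw [hxe]
    simpa [mul_comm] using this
  have hyd : HasDerivAt y (2 * (a * Real.exp (-t))) t := by
    have : HasDerivAt (fun s : ℝ => -2*a * Real.exp (-s) - (2*x₀ + y₀)^2/2 + 2*x₀ + y₀)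
        (-2*a * (-Real.exp (-t))) t := by
      exact ((((he t).const_mul (-2*a)).sub_const _).add_const _).add_const _
    have hye : y = fun s : ℝ => -2*a * Real.exp (-s) - (2*x₀ + y₀)^2/2 + 2*x₀ + y₀ :=
      funext hy
    rw [hye]
    convert this using 1
    ring
  have hzd : HasDerivAt z (-(a * Real.exp (-t))) t := by
    have hze : z = fun s : ℝ => 1 - x s - y s := funext hz
    rw [hze]
    have : HasDerivAt (fun s : ℝ => 1 - x s - y s)
        (- -(a * Real.exp (-t)) - 2 * (a * Real.exp (-t))) t := ((hxd.const_sub 1).sub hyd)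
    convert this using 1
    ring
  refine ⟨?_, ?_, ?_⟩
  · convert hxd using 1
    rw [hx, hy]; ring
  · convert hyd using 1
    rw [hx, hy, hz, hx, hy]; ring
  · convert hzd using 1
    rw [hz, hx, hy]; ring
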